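/- Let R be a generalized curvature tensor on a finite-dimensional real inner product space, B a self-adjoint R-compatible endomorphism, and define R̊(X,Y) = Σ_{a,b} b(eₐ,e_b) R(eₐ, X, Y, e_b), where b(U,V)=⟨BU,V⟩. Then R̊ is symmetric and commutes with B: R̊(BX, Y) = R̊(X, BY). -/
import Mathlib


open RealInnerProductSpace

/-- If `R` is a generalized curvature tensor, `B` a self-adjoint `R`-compatible
endomorphism with associated bilinear form `b(U,V) = ⟪BU, V⟫`, then the double
contraction `R̊(X,Y) = ∑_{a,b} b(eₐ, e_b) R(eₐ, X, Y, e_b)` is symmetric and commutes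
with `B`: `R̊(BX, Y) = R̊(X, BY)`. -/
theorem ringR_symmetric_and_commutes
    {V : Type*} [NormedAddCommGroup V] [InnerProductSpace ℝ V] [FiniteDimensional ℝ V]
    (e : OrthonormalBasis (Fin (Module.finrank ℝ V)) ℝ V)
    (R : V →ₗ[ℝ] V →ₗ[ℝ] V →ₗ[ℝ] V →ₗ[ℝ] ℝ)
    (hanti1 : ∀ X Y Z W : V, R X Y Z W = - R Y X Z W)
    (hanti2 : ∀ X Y Z W : V, R X Y Z W = - R X Y W Z)
    (hpair : ∀ X Y Z W : V, R X Y Z W = R Z W X Y)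
    (hbianchi : ∀ X Y Z W : V, R X Y Z W + R Y Z X W + R Z X Y W = 0)
    (B : V →ₗ[ℝ] V)
    (hB : ∀ X Y : V, ⟪B X, Y⟫ = ⟪X, B Y⟫)
    (hcompat : ∀ X Y Z W : V, R (B X) Y Z W + R (B Y) Z X W + R (B Z) X Y W = 0) :
    (∀ X Y : V, (∑ a, ∑ b, ⟪B (e a), e b⟫ * R (e a) X Y (e b)) =
        ∑ a, ∑ b, ⟪B (e a), e b⟫ * R (e a) Y X (e b)) ∧
    (∀ X Y : V, (∑ a, ∑ b, ⟪B (e a), e b⟫ * R (e a) (B X) Y (e b)) =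
        ∑ a, ∑ b, ⟪B (e a), e b⟫ * R (e a) X (B Y) (e b)) := by

  -- Contraction in the last slot: R̊(X,Y) = ∑ₐ R(eₐ, X, Y, B eₐ)
  have key1 : ∀ X Y : V, (∑ a, ∑ b, ⟪B (e a), e b⟫ * R (e a) X Y (e b)) =
      ∑ a, R (e a) X Y (B (e a)) := by
    intro X Y
    refine Finset.sum_congr rfl fun a _ => ?_
    conv_rhs => rw [← e.sum_repr' (B (e a))]
    rw [map_sum]
    simp only [map_smul, smul_eq_mul]
    exact Finset.sum_congr rfl fun b _ => by rw [real_inner_comm]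
  -- Contraction in the first slot: R̊(X,Y) = ∑_b R(B e_b, X, Y, e_b)
  have key2 : ∀ X Y : V, (∑ a, ∑ b, ⟪B (e a), e b⟫ * R (e a) X Y (e b)) =
      ∑ b, R (B (e b)) X Y (e b) := by
    intro X Y
    rw [Finset.sum_comm]
    refine Finset.sum_congr rfl fun b _ => ?_
    have h1 : ∀ a, ⟪B (e a), e b⟫ = ⟪B (e b), e a⟫ := fun a => by
      rw [hB, real_inner_comm]
    conv_rhs => rw [← e.sum_repr' (B (e b))]
    simp only [map_sum, LinearMap.sum_apply, map_smul, LinearMap.smul_apply, smul_eq_mul]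
    exact Finset.sum_congr rfl fun a _ => by rw [h1 a, real_inner_comm]
  -- The Ricci-type contraction T(U,V) = ∑ₐ R(eₐ,U,V,eₐ) is symmetric
  set T : V → V → ℝ := fun U W => ∑ a, R (e a) U W (e a) with hT
  have Tsym : ∀ U W : V, T U W = T W U := by
    intro U W
    refine Finset.sum_congr rfl fun a _ => ?_
    rw [hpair (e a) U W (e a), hanti1 W (e a), hanti2 (e a) W, neg_neg]
  -- From compatibility: ∑ₐ R(B eₐ, X, Y, eₐ) = T(BY, X)
  have formula : ∀ X Y : V, (∑ b, R (B (e b)) X Y (e b)) = T (B Y) X := by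
    intro X Y
    refine Finset.sum_congr rfl fun a _ => ?_
    have h0 : R (B X) Y (e a) (e a) = 0 := by
      have := hanti2 (B X) Y (e a) (e a); linarith
    have hc := hcompat (e a) X Y (e a)
    have h1 : R (B Y) (e a) X (e a) = - R (e a) (B Y) X (e a) :=
      hanti1 (B Y) (e a) X (e a)
    linarith
  -- Hence R̊(X,Y) = T(BY,X)
  have main : ∀ X Y : V, (∑ a, ∑ b, ⟪B (e a), e b⟫ * R (e a) X Y (e b)) = T (B Y) X := by
    intro X Y; rw [key2, formula]
  -- Symmetry of R̊
  have sym : ∀ X Y : V, (∑ a, ∑ b, ⟪B (e a), e b⟫ * R (e a) X Y (e b)) =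
      ∑ a, ∑ b, ⟪B (e a), e b⟫ * R (e a) Y X (e b) := by
    intro X Y
    rw [key1 X Y, key2 Y X]
    refine Finset.sum_congr rfl fun a _ => ?_
    rw [hpair (e a) X Y (B (e a)), hanti1 Y (B (e a)), hanti2 (B (e a)) Y, neg_neg]
  refine ⟨sym, fun X Y => ?_⟩
  calc (∑ a, ∑ b, ⟪B (e a), e b⟫ * R (e a) (B X) Y (e b))
      = T (B Y) (B X) := main (B X) Y
    _ = T (B X) (B Y) := Tsym _ _
    _ = ∑ a, ∑ b, ⟪B (e a), e b⟫ * R (e a) (B Y) X (e b) := (main (B Y) X).symm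
    _ = ∑ a, ∑ b, ⟪B (e a), e b⟫ * R (e a) X (B Y) (e b) := (sym X (B Y)).symm
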